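/- Fix N ≥ 2, 0 < q,t < 1, b<0<a, c=conj(d) ∉ ℝ. Let D_N be the operator D_N = Σ_{i=1}^N [ (S⁺_{t,i} V_N / V_N) σ⁺_N(x_i)(S⁺_{q,i} - 1) + (S⁻_{t,i} V_N / V_N) σ⁻_N(x_i)(S⁻_{q,i} - 1) ], where σ^±_N(x) = t^{N-1} σ^±(x), V_N = ∏_{i<j}(x_i - x_j), and S^±_{q,i}, S^±_{t,i} multiply the i-th variable by q^{±1}, t^{±1}. Then the constant term of D_N p_{2,N}, where p_{2,N} = Σ x_i², equals C_N(q,t)(1+q)(t^{1-N} q^{-1} - 1) with C_N(q,t) = (q t^{N-1}/(a|b|))(1-q)(1-t^N)/(1-t); in particular it is strictly positive. -/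

import Mathlib

open Finset

/-- Vandermonde product `∏_{i<j} (x_i - x_j)`. -/
noncomputable def bqjVandermonde (N : ℕ) (x : Fin N → ℂ) : ℂ :=
  ∏ i : Fin N, ∏ j ∈ Finset.Ioi i, (x i - x j)

/-- `σ⁺_N(x) = -(q t^{N-1}/(ab)) (c - 1/x)(d - 1/x)`. -/
noncomputable def bqjSigmaPlusN (N : ℕ) (q t a b : ℝ) (c d : ℂ) (x : ℂ) : ℂ :=
  (t : ℂ) ^ ((N : ℤ) - 1) * (-((q : ℂ)/((a : ℂ)*(b : ℂ))) * (c - x⁻¹) * (d - x⁻¹))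

/-- `σ⁻_N(x) = -(q² t^{N-1}/(ab)) (a/q - 1/x)(b/q - 1/x)`. -/
noncomputable def bqjSigmaMinusN (N : ℕ) (q t a b : ℝ) (x : ℂ) : ℂ :=
  (t : ℂ) ^ ((N : ℤ) - 1) *
    (-((q : ℂ)^2/((a : ℂ)*(b : ℂ))) * ((a : ℂ)/(q : ℂ) - x⁻¹) * ((b : ℂ)/(q : ℂ) - x⁻¹))

/-- The `N`-variable big q-Jacobi q-difference operator `D_N`, applied to a function
`f` of `N` complex variables, at the point `x`. -/
noncomputable def bqjDN (N : ℕ) (q t a b : ℝ) (c d : ℂ)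
    (f : (Fin N → ℂ) → ℂ) (x : Fin N → ℂ) : ℂ :=
  ∑ i : Fin N,
    (bqjVandermonde N (Function.update x i ((t : ℂ) * x i)) / bqjVandermonde N x
        * bqjSigmaPlusN N q t a b c d (x i)
        * (f (Function.update x i ((q : ℂ) * x i)) - f x)
      + bqjVandermonde N (Function.update x i ((t : ℂ)⁻¹ * x i)) / bqjVandermonde N x
        * bqjSigmaMinusN N q t a b (x i)
        * (f (Function.update x i ((q : ℂ)⁻¹ * x i)) - f x))

section BqjAux
open Polynomial

variable {F : Type*} [Field F] {ι : Type*} [DecidableEq ι]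

theorem coeff_basis_top (s : Finset ι) (v : ι → F) {i : ι} (hi : i ∈ s) :
    (Lagrange.basis s v i).coeff (s.card - 1) = (∏ j ∈ s.erase i, (v i - v j))⁻¹ := by
  unfold Lagrange.basis Lagrange.basisDivisor
  rw [Finset.prod_mul_distrib, ← map_prod, coeff_C_mul, Finset.prod_inv_distrib]
  have hmonic : (∏ j ∈ s.erase i, (X - C (v j))).Monic :=
    monic_prod_of_monic _ _ fun j _ => monic_X_sub_C _
  have hdeg : (∏ j ∈ s.erase i, (X - C (v j))).natDegree = (s.erase i).card := by
    rw [natDegree_prod_of_monic _ _ fun j _ => monic_X_sub_C _]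
    simp
  rw [Finset.card_erase_of_mem hi] at hdeg
  rw [← hdeg, hmonic.coeff_natDegree, mul_one]

theorem lagrange_coeff_sum (s : Finset ι) (v : ι → F) (hvs : Set.InjOn v s)
    (f : F[X]) (hdeg : f.degree < s.card) :
    ∑ i ∈ s, f.eval (v i) * (∏ j ∈ s.erase i, (v i - v j))⁻¹ = f.coeff (s.card - 1) := by
  conv_rhs => rw [Lagrange.eq_interpolate hvs hdeg]
  rw [Lagrange.interpolate_apply, finset_sum_coeff]
  refine Finset.sum_congr rfl fun i hi => ?_
  rw [coeff_C_mul, coeff_basis_top s v hi]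

theorem prod_neg' (s : Finset ι) (f : ι → F) :
    ∏ j ∈ s, -f j = (-1) ^ s.card * ∏ j ∈ s, f j := by
  rw [Finset.prod_congr rfl fun j _ => (neg_one_mul (f j)).symm, Finset.prod_mul_distrib,
    Finset.prod_const]

theorem lagrange_coeff_sum' (s : Finset ι) (v : ι → F) (hvs : Set.InjOn v s)
    (f Q R : F[X]) (hf : f = Q * ∏ j ∈ s, (X - C (v j)) + R)
    (hdeg : R.degree < s.card) :
    ∑ i ∈ s, f.eval (v i) * (∏ j ∈ s.erase i, (v i - v j))⁻¹ = R.coeff (s.card - 1) := by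
  rw [← lagrange_coeff_sum s v hvs R hdeg]
  refine Finset.sum_congr rfl fun i hi => ?_
  have : (∏ j ∈ s, (X - C (v j))).eval (v i) = 0 := by
    rw [eval_prod]
    exact Finset.prod_eq_zero hi (by simp)
  rw [hf]
  simp [this]

theorem inv_node_sum {N : ℕ} (hN : 1 ≤ N) (x : Fin N → F) (hx0 : ∀ i, x i ≠ 0)
    (hinj : Function.Injective x) :
    ∑ i : Fin N, (x i)⁻¹ * (∏ j ∈ Finset.univ.erase i, (x i - x j))⁻¹
      = (-1) ^ (N + 1) * (∏ j, x j)⁻¹ := by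
  classical
  set v : Option (Fin N) → F := fun o => o.elim 0 x with hv
  have hvinj : Function.Injective v := by
    intro o1 o2 h
    match o1, o2 with
    | none, none => rfl
    | none, some i => exact absurd h.symm (hx0 i)
    | some i, none => exact absurd h (hx0 i)
    | some i, some j => exact congrArg some (hinj h)
  have hcard : (Finset.univ : Finset (Option (Fin N))).card = N + 1 := by simp
  have key := lagrange_coeff_sum (Finset.univ : Finset (Option (Fin N))) v
    hvinj.injOn (1 : F[X])
    (by rw [hcard, degree_one]; exact_mod_cast WithBot.coe_lt_coe.mpr (Nat.succ_pos N))
  rw [hcard] at key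
  simp only [eval_one, one_mul, Nat.add_sub_cancel] at key
  have hco : (1 : F[X]).coeff N = 0 := by
    rw [coeff_one]
    simp [Nat.one_le_iff_ne_zero.mp hN]
  rw [hco, Fintype.sum_option] at key
  -- identify the `none` term
  have hen : (Finset.univ : Finset (Option (Fin N))).erase none
      = Finset.univ.map ⟨some, Option.some_injective _⟩ := by
    ext o; cases o <;> simp
  have hnone : (∏ j ∈ (Finset.univ : Finset (Option (Fin N))).erase none, (v none - v j))⁻¹
      = ((-1) ^ N * ∏ j, x j)⁻¹ := by
    rw [hen, Finset.prod_map]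
    congr 1
    calc ∏ i : Fin N, (v none - v (some i)) = ∏ i : Fin N, -(x i) := by
          refine Finset.prod_congr rfl fun i _ => ?_
          simp [hv]
      _ = (-1) ^ N * ∏ j, x j := by rw [prod_neg']; simp
  have hsome : ∀ i : Fin N,
      (∏ j ∈ (Finset.univ : Finset (Option (Fin N))).erase (some i), (v (some i) - v j))⁻¹
        = (x i)⁻¹ * (∏ j ∈ Finset.univ.erase i, (x i - x j))⁻¹ := by
    intro i
    have hes : (Finset.univ : Finset (Option (Fin N))).erase (some i)
        = insert none ((Finset.univ.erase i).map ⟨some, Option.some_injective _⟩) := by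
      ext o; cases o <;> simp [eq_comm]
    rw [hes, Finset.prod_insert (by simp), Finset.prod_map]
    have : v (some i) - v none = x i := by simp [hv]
    rw [this, mul_inv]
    congr 1
  simp only [hsome] at key
  rw [hnone] at key
  have h1 : ((-1 : F) ^ N * ∏ j, x j) ≠ 0 := by
    apply mul_ne_zero (pow_ne_zero _ (by norm_num))
    exact Finset.prod_ne_zero_iff.mpr fun i _ => hx0 i
  have hsum : ∑ i : Fin N, (x i)⁻¹ * (∏ j ∈ Finset.univ.erase i, (x i - x j))⁻¹
      = -(((-1 : F) ^ N * ∏ j, x j)⁻¹) := by linear_combination key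
  rw [hsum, mul_inv, ← inv_pow]
  have h2 : ((-1 : F))⁻¹ = -1 := by norm_num
  rw [h2]
  ring

theorem monic_prodXC {N : ℕ} (x : Fin N → F) : (∏ j, (X - C (x j))).Monic :=
  monic_prod_of_monic _ _ fun j _ => monic_X_sub_C _

theorem natDegree_prodXC {N : ℕ} (x : Fin N → F) : (∏ j, (X - C (x j))).natDegree = N := by
  rw [natDegree_prod_of_monic _ _ fun j _ => monic_X_sub_C _]
  simp

theorem coeff_prodXC {N : ℕ} (x : Fin N → F) {k : ℕ} (hk : k ≤ N) :
    (∏ j, (X - C (x j))).coeff k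
      = (-1) ^ (N - k) * ∑ T ∈ Finset.powersetCard (N - k) Finset.univ, ∏ i ∈ T, x i := by
  have h1 : (∏ j, (X - C (x j))) = ((Finset.univ.val.map x).map fun t => X - C t).prod := by
    rw [Multiset.map_map]; rfl
  have hcard : Multiset.card (Finset.univ.val.map x) = N := by simp
  rw [h1, Multiset.prod_X_sub_C_coeff _ (by rw [hcard]; exact hk), hcard,
    Finset.esymm_map_val]

theorem coeff_prodCuXC {N : ℕ} (x : Fin N → F) {u : F} (hu : u ≠ 0) {k : ℕ} (hk : k ≤ N) :
    (∏ j, (C u * X - C (x j))).coeff k = u ^ k * (∏ j, (X - C (x j))).coeff k := by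
  have hGu : (∏ j, (C u * X - C (x j))) = C (u ^ N) * ∏ j, (X - C (x j / u)) := by
    rw [Finset.prod_congr rfl (fun j _ => show C u * X - C (x j) = C u * (X - C (x j / u)) by
      rw [mul_sub, ← C_mul, mul_div_cancel₀ _ hu]), Finset.prod_mul_distrib,
      Finset.prod_const, ← C_pow]
    simp
  rw [hGu, coeff_C_mul, coeff_prodXC _ hk, coeff_prodXC _ hk]
  have hsc : ∑ T ∈ Finset.powersetCard (N - k) Finset.univ, ∏ i ∈ T, x i / u
      = (∑ T ∈ Finset.powersetCard (N - k) Finset.univ, ∏ i ∈ T, x i) * (u ^ (N - k))⁻¹ := by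
    rw [Finset.sum_mul]
    refine Finset.sum_congr rfl fun T hT => ?_
    rw [Finset.prod_div_distrib, Finset.prod_const, (Finset.mem_powersetCard.mp hT).2,
      div_eq_mul_inv]
  rw [hsc]
  have hsplit : u ^ N = u ^ k * u ^ (N - k) := by
    rw [← pow_add, Nat.add_sub_cancel' hk]
  rw [hsplit]
  field_simp

theorem coeff_mul_linear (p : F[X]) (a b : F) (n : ℕ) :
    (p * (C a * X + C b)).coeff (n + 1) = a * p.coeff n + b * p.coeff (n + 1) := by
  rw [mul_add, coeff_add, ← mul_assoc, mul_comm p (C a), mul_assoc, coeff_C_mul, coeff_mul_X,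
    mul_comm p (C b), coeff_C_mul]

theorem key_sum {m : ℕ} (x : Fin (m + 2) → F) (hx0 : ∀ i, x i ≠ 0)
    (hinj : Function.Injective x) {u : F} (hu0 : u ≠ 0) (hu1 : u ≠ 1) (α β γ : F) :
    ∑ i, (∏ j ∈ Finset.univ.erase i, (u * x i - x j))
        * (∏ j ∈ Finset.univ.erase i, (x i - x j))⁻¹ * (α * x i ^ 2 + β * x i + γ)
      = α * (u ^ (m + 1) * (∑ T ∈ Finset.powersetCard 1 Finset.univ, ∏ i ∈ T, x i) ^ 2
              - u ^ m * (u + 1) * ∑ T ∈ Finset.powersetCard 2 Finset.univ, ∏ i ∈ T, x i)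
        + β * u ^ (m + 1) * (∑ T ∈ Finset.powersetCard 1 Finset.univ, ∏ i ∈ T, x i)
        + γ * ∑ k ∈ Finset.range (m + 2), u ^ k := by
  classical
  set E1 := ∑ T ∈ Finset.powersetCard 1 (Finset.univ : Finset (Fin (m+2))), ∏ i ∈ T, x i with hE1
  set E2 := ∑ T ∈ Finset.powersetCard 2 (Finset.univ : Finset (Fin (m+2))), ∏ i ∈ T, x i with hE2
  set M : F[X] := ∏ j, (X - C (x j)) with hM
  set Gu : F[X] := ∏ j, (C u * X - C (x j)) with hGu
  set D : F[X] := Gu - C (u ^ (m + 2)) * M with hD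
  set cc : F := α * D.coeff (m + 1) with hcc
  set R : F[X] := D * (C α * X + C β) + C γ * Gu.divX - C cc * M with hR
  set Q : F[X] := C (u ^ (m + 2)) * (C α * X + C β) + C cc with hQ
  set H : F[X] := Gu * (C α * X + C β) + C γ * Gu.divX with hH
  have hMdeg : M.natDegree = m + 2 := natDegree_prodXC x
  have hMmon : M.Monic := monic_prodXC x
  have hMtop : M.coeff (m + 2) = 1 := by
    have := hMmon.coeff_natDegree
    rwa [hMdeg] at this
  have hMhigh : ∀ k, m + 2 < k → M.coeff k = 0 := fun k hk =>
    coeff_eq_zero_of_natDegree_lt (by omega)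
  have hGuhigh : ∀ k, m + 2 < k → Gu.coeff k = 0 := by
    intro k hk
    apply coeff_eq_zero_of_natDegree_lt
    have h1 : ∀ j ∈ (Finset.univ : Finset (Fin (m + 2))),
        (C u * X - C (x j)).natDegree ≤ 1 := fun j _ => by
      refine (natDegree_sub_le _ _).trans ?_
      simp [natDegree_C_mul_X _ hu0]
    calc Gu.natDegree ≤ ∑ j : Fin (m+2), (C u * X - C (x j)).natDegree :=
          natDegree_prod_le _ _
      _ ≤ ∑ _j : Fin (m+2), 1 :=
          Finset.sum_le_sum (f := fun j => (C u * X - C (x j)).natDegree) (g := fun _ => 1) h1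
      _ = m + 2 := by simp
      _ < k := hk
  have hGucoeff : ∀ k, k ≤ m + 2 → Gu.coeff k = u ^ k * M.coeff k := fun k hk =>
    coeff_prodCuXC x hu0 hk
  have hDcoeff : ∀ k, k ≤ m + 2 → D.coeff k = (u ^ k - u ^ (m + 2)) * M.coeff k := by
    intro k hk
    rw [hD, coeff_sub, coeff_C_mul, hGucoeff k hk]
    ring
  have hDhigh : ∀ k, m + 2 ≤ k → D.coeff k = 0 := by
    intro k hk
    rcases eq_or_lt_of_le hk with h | h
    · rw [hDcoeff k h.symm.le, ← h, hMtop]; ring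
    · rw [hD, coeff_sub, coeff_C_mul, hGuhigh k h, hMhigh k h]; ring
  have hHQR : H = Q * M + R := by rw [hH, hQ, hR, hD]; ring
  have hRdeg : R.degree < ((m + 2 : ℕ) : WithBot ℕ) := by
    rw [degree_lt_iff_coeff_zero]
    intro k hk
    have hk' : m + 2 ≤ k := by exact_mod_cast hk
    obtain ⟨j, rfl⟩ : ∃ j, k = (m + 1 + j) + 1 := ⟨k - m - 2, by omega⟩
    rw [hR, coeff_sub, coeff_add, coeff_C_mul, coeff_C_mul, coeff_divX,
      coeff_mul_linear D α β (m + 1 + j)]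
    rcases Nat.eq_zero_or_pos j with rfl | hj
    · rw [show m + 1 + 0 = m + 1 by omega, hDhigh (m + 1 + 1) (by omega),
        hGuhigh (m + 1 + 1 + 1) (by omega), show m + 1 + 1 = m + 2 by omega, hMtop, hcc]
      ring
    · rw [hDhigh _ (by omega), hDhigh _ (by omega), hGuhigh _ (by omega), hMhigh _ (by omega)]
      ring
  have hcard : (Finset.univ : Finset (Fin (m + 2))).card = m + 2 := by simp
  have hsum := lagrange_coeff_sum' (Finset.univ : Finset (Fin (m + 2))) x hinj.injOn H Q R
    (by rw [hHQR, hM]) (by rw [hcard]; exact hRdeg)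
  rw [hcard, show m + 2 - 1 = m + 1 by omega] at hsum
  -- value of R.coeff (m+1)
  have hM1 : M.coeff (m + 1) = -E1 := by
    rw [hM, coeff_prodXC x (by omega : m + 1 ≤ m + 2), show m + 2 - (m + 1) = 1 by omega]
    rw [hE1]; ring
  have hM2 : M.coeff m = E2 := by
    rw [hM, coeff_prodXC x (by omega : m ≤ m + 2), show m + 2 - m = 2 by omega]
    rw [hE2]; ring
  have hRcoeff : R.coeff (m + 1)
      = α * ((u ^ m - u ^ (m + 2)) * E2) + β * ((u ^ (m + 1) - u ^ (m + 2)) * (-E1))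
        + γ * u ^ (m + 2) - α * ((u ^ (m + 1) - u ^ (m + 2)) * (-E1)) * (-E1) := by
    rw [hR, coeff_sub, coeff_add, coeff_C_mul, coeff_C_mul, coeff_divX,
      show m + 1 = m + 1 by rfl, coeff_mul_linear D α β m]
    rw [show m + 1 + 1 = m + 2 by omega,
      hGucoeff (m + 2) le_rfl, hMtop, hDcoeff m (by omega), hDcoeff (m + 1) (by omega),
      hM1, hM2, hcc, hDcoeff (m + 1) (by omega), hM1]
    ring
  -- evaluation identities
  have hGuEval : ∀ i, Gu.eval (x i)
      = ((u - 1) * x i) * ∏ j ∈ Finset.univ.erase i, (u * x i - x j) := by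
    intro i
    rw [hGu, eval_prod]
    simp only [eval_sub, eval_mul, eval_C, eval_X]
    rw [← Finset.mul_prod_erase Finset.univ (fun j => u * x i - x j) (Finset.mem_univ i)]
    ring
  have hdivXEval : ∀ i, Gu.divX.eval (x i) = (Gu.eval (x i) - Gu.coeff 0) * (x i)⁻¹ := by
    intro i
    have h := Gu.divX_mul_X_add
    have h2 := congrArg (eval (x i)) h
    simp only [eval_add, eval_mul, eval_X, eval_C] at h2
    rw [eq_mul_inv_iff_mul_eq₀ (hx0 i)]
    linear_combination h2
  have hHEval : ∀ i, H.eval (x i)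
      = (u - 1) * ((∏ j ∈ Finset.univ.erase i, (u * x i - x j)) * (α * x i ^ 2 + β * x i + γ))
        - γ * Gu.coeff 0 * (x i)⁻¹ := by
    intro i
    rw [hH]
    simp only [eval_add, eval_mul, eval_C, eval_X]
    rw [hdivXEval i, hGuEval i]
    field_simp [hx0 i]
    ring
  -- split the sum
  have hsplit : ∑ i, H.eval (x i) * (∏ j ∈ Finset.univ.erase i, (x i - x j))⁻¹
      = (u - 1) * (∑ i, (∏ j ∈ Finset.univ.erase i, (u * x i - x j))
          * (∏ j ∈ Finset.univ.erase i, (x i - x j))⁻¹ * (α * x i ^ 2 + β * x i + γ))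
        - γ * Gu.coeff 0 * ∑ i, (x i)⁻¹ * (∏ j ∈ Finset.univ.erase i, (x i - x j))⁻¹ := by
    rw [Finset.mul_sum, Finset.mul_sum, ← Finset.sum_sub_distrib]
    refine Finset.sum_congr rfl fun i _ => ?_
    rw [hHEval i]
    ring
  have hGu0 : Gu.coeff 0 = (-1) ^ (m + 2) * ∏ j, x j := by
    rw [hGucoeff 0 (by omega), hM, coeff_prodXC x (by omega : 0 ≤ m + 2)]
    simp only [Nat.sub_zero, pow_zero, one_mul]
    have hps : Finset.powersetCard (m + 2) (Finset.univ : Finset (Fin (m + 2)))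
        = {Finset.univ} := by
      simpa using Finset.powersetCard_self (Finset.univ : Finset (Fin (m + 2)))
    rw [hps, Finset.sum_singleton]
  have hZ := inv_node_sum (by omega : 1 ≤ m + 2) x hx0 hinj
  rw [hsum, hZ, hGu0] at hsplit
  -- hsplit : R.coeff (m+1) = (u-1) * S - γ * ((-1)^(m+2) * ∏x) * ((-1)^(m+3) * (∏x)⁻¹)
  have hprodx : (∏ j, x j) ≠ 0 := Finset.prod_ne_zero_iff.mpr fun i _ => hx0 i
  have hsign : ((-1 : F) ^ (m + 2) * ∏ j, x j) * ((-1) ^ (m + 2 + 1) * (∏ j, x j)⁻¹) = -1 := by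
    calc ((-1 : F) ^ (m + 2) * ∏ j, x j) * ((-1) ^ (m + 2 + 1) * (∏ j, x j)⁻¹)
        = ((-1 : F) ^ ((m + 2) + (m + 2 + 1))) * ((∏ j, x j) * (∏ j, x j)⁻¹) := by
          rw [pow_add]; ring
      _ = -1 := by
          rw [mul_inv_cancel₀ hprodx, mul_one, Odd.neg_one_pow ⟨m + 2, by ring⟩]
  have hu1' : u - 1 ≠ 0 := sub_ne_zero.mpr hu1
  apply mul_left_cancel₀ hu1'
  have hgeom := geom_sum_mul u (m + 2)
  calc (u - 1) * (∑ i, (∏ j ∈ Finset.univ.erase i, (u * x i - x j))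
          * (∏ j ∈ Finset.univ.erase i, (x i - x j))⁻¹ * (α * x i ^ 2 + β * x i + γ))
      = R.coeff (m + 1) + γ * (((-1 : F) ^ (m + 2) * ∏ j, x j)
          * ((-1) ^ (m + 2 + 1) * (∏ j, x j)⁻¹)) := by
        linear_combination -hsplit
    _ = R.coeff (m + 1) - γ := by rw [hsign]; ring
    _ = (u - 1) * (α * (u ^ (m + 1) * E1 ^ 2 - u ^ m * (u + 1) * E2)
          + β * u ^ (m + 1) * E1 + γ * ∑ k ∈ Finset.range (m + 2), u ^ k) := by
        rw [hRcoeff]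
        linear_combination (-γ) * hgeom

theorem vandermonde_update {N : ℕ} (x : Fin N → ℂ) (i : Fin N) (y : ℂ) :
    bqjVandermonde N (Function.update x i y)
      = (∏ j ∈ Finset.Ioi i, (y - x j)) * ((∏ k ∈ Finset.Iio i, (x k - y))
          * ∏ i' ∈ Finset.univ.erase i, ∏ j ∈ (Finset.Ioi i').erase i, (x i' - x j)) := by
  unfold bqjVandermonde
  rw [← Finset.mul_prod_erase Finset.univ _ (Finset.mem_univ i)]
  congr 1
  · refine Finset.prod_congr rfl fun j hj => ?_
    rw [Function.update_self, Function.update_of_ne (Finset.mem_Ioi.mp hj).ne']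
  · have hstep : ∀ i' ∈ Finset.univ.erase i,
        (∏ j ∈ Finset.Ioi i', (Function.update x i y i' - Function.update x i y j))
          = (if i' < i then (x i' - y) else 1) * ∏ j ∈ (Finset.Ioi i').erase i, (x i' - x j) := by
      intro i' hi'
      have hi'ne : i' ≠ i := (Finset.mem_erase.mp hi').1
      by_cases h : i' < i
      · rw [if_pos h, ← Finset.mul_prod_erase (Finset.Ioi i') _ (Finset.mem_Ioi.mpr h)]
        congr 1
        · rw [Function.update_of_ne hi'ne, Function.update_self]
        · refine Finset.prod_congr rfl fun j hj => ?_
          rw [Function.update_of_ne hi'ne, Function.update_of_ne (Finset.mem_erase.mp hj).1]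
      · rw [if_neg h, one_mul,
          Finset.erase_eq_of_notMem (fun hc => h (Finset.mem_Ioi.mp hc))]
        refine Finset.prod_congr rfl fun j hj => ?_
        have hji : j ≠ i := fun hc => h (Finset.mem_Ioi.mp (hc ▸ hj))
        rw [Function.update_of_ne hi'ne, Function.update_of_ne hji]
    rw [Finset.prod_congr rfl hstep, Finset.prod_mul_distrib]
    congr 1
    rw [← Finset.prod_filter]
    congr 1
    ext a
    simp only [Finset.mem_filter, Finset.mem_erase, Finset.mem_univ, true_and,
      Finset.mem_Iio, and_iff_right_iff_imp]
    exact fun h => ⟨ne_of_lt h, trivial⟩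

theorem vandermonde_ratio {N : ℕ} (x : Fin N → ℂ) (hinj : Function.Injective x)
    (i : Fin N) (y : ℂ) :
    bqjVandermonde N (Function.update x i y) / bqjVandermonde N x
      = (∏ j ∈ Finset.univ.erase i, (y - x j))
          * (∏ j ∈ Finset.univ.erase i, (x i - x j))⁻¹ := by
  classical
  have hdisj : Disjoint (Finset.Iio i) (Finset.Ioi i) := by
    rw [Finset.disjoint_left]
    intro a ha hb
    exact absurd (lt_trans (Finset.mem_Iio.mp ha) (Finset.mem_Ioi.mp hb)) (lt_irrefl a)
  have hset : Finset.univ.erase i = Finset.Iio i ∪ Finset.Ioi i := by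
    ext a
    simp only [Finset.mem_erase, Finset.mem_univ, and_true, Finset.mem_union,
      Finset.mem_Iio, Finset.mem_Ioi]
    exact ne_iff_lt_or_gt
  have herase : ∀ z : ℂ, ∏ j ∈ Finset.univ.erase i, (z - x j)
      = (∏ j ∈ Finset.Iio i, (z - x j)) * ∏ j ∈ Finset.Ioi i, (z - x j) := by
    intro z
    rw [hset, Finset.prod_union hdisj]
  have hVx := vandermonde_update x i (x i)
  rw [Function.update_eq_self] at hVx
  have hne : ∀ j, j ≠ i → x i - x j ≠ 0 := fun j hj =>
    sub_ne_zero.mpr fun hc => hj (hinj hc.symm)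
  have hQA : (∏ j ∈ Finset.Ioi i, (x i - x j)) ≠ 0 :=
    Finset.prod_ne_zero_iff.mpr fun j hj => hne j (Finset.mem_Ioi.mp hj).ne'
  have hQB' : (∏ k ∈ Finset.Iio i, (x k - x i)) ≠ 0 :=
    Finset.prod_ne_zero_iff.mpr fun k hk =>
      sub_ne_zero.mpr fun hc => (ne_of_lt (Finset.mem_Iio.mp hk)) (hinj hc)
  have hC0 : (∏ i' ∈ Finset.univ.erase i, ∏ j ∈ (Finset.Ioi i').erase i, (x i' - x j)) ≠ 0 := by
    refine Finset.prod_ne_zero_iff.mpr fun i' _ => Finset.prod_ne_zero_iff.mpr fun j hj => ?_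
    exact sub_ne_zero.mpr fun hc => (ne_of_lt (Finset.mem_Ioi.mp (Finset.mem_of_mem_erase hj)))
      (hinj hc)
  have hsgn1 : ∏ k ∈ Finset.Iio i, (x k - y)
      = (-1) ^ (Finset.Iio i).card * ∏ k ∈ Finset.Iio i, (y - x k) := by
    rw [← prod_neg']
    exact Finset.prod_congr rfl fun k _ => by ring
  have hsgn2 : ∏ k ∈ Finset.Iio i, (x k - x i)
      = (-1) ^ (Finset.Iio i).card * ∏ k ∈ Finset.Iio i, (x i - x k) := by
    rw [← prod_neg']
    exact Finset.prod_congr rfl fun k _ => by ring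
  have hQB : (∏ k ∈ Finset.Iio i, (x i - x k)) ≠ 0 := by
    intro hc
    exact hQB' (by rw [hsgn2, hc, mul_zero])
  have hs : ((-1 : ℂ)) ^ (Finset.Iio i).card ≠ 0 := pow_ne_zero _ (by norm_num)
  rw [vandermonde_update x i y, hVx, herase, herase, hsgn1, hsgn2]
  field_simp

end BqjAux

theorem sum_update_sq {N : ℕ} (w : Fin N → ℂ) (i : Fin N) (y : ℂ) :
    (∑ j, (Function.update w i y j) ^ 2) = y ^ 2 - w i ^ 2 + ∑ j, w j ^ 2 := by
  have h : ∀ j, (Function.update w i y j) ^ 2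
      = Function.update (fun k => w k ^ 2) i (y ^ 2) j := by
    intro j
    rcases eq_or_ne j i with rfl | hji
    · simp
    · simp [Function.update_of_ne hji]
  rw [Finset.sum_congr rfl fun j _ => h j,
    Finset.sum_update_of_mem (Finset.mem_univ i), Finset.sdiff_singleton_eq_erase,
    Finset.sum_erase_eq_sub (f := fun k => w k ^ 2) (Finset.mem_univ i)]
  ring

set_option maxHeartbeats 1000000 in
/-- The constant term of `D_N p_{2,N}` equals
`C_N(q,t)(1+q)(t^{1-N}q⁻¹ - 1) > 0`, where
`C_N(q,t) = (q t^{N-1}/(a|b|))(1-q)(1-t^N)/(1-t)`. -/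
theorem bqjDN_constant_term_p2
    (N : ℕ) (hN : 2 ≤ N) (q t a b : ℝ) (c d : ℂ)
    (hq : 0 < q) (hq1 : q < 1) (ht : 0 < t) (ht1 : t < 1)
    (hb : b < 0) (ha : 0 < a) (hcd : c = starRingEnd ℂ d) (hc : c.im ≠ 0) :
    ∃ P : MvPolynomial (Fin N) ℝ,
      (∀ x : Fin N → ℝ, (∀ i, x i ≠ 0) → (∀ i j, i ≠ j → x i ≠ x j) →
        bqjDN N q t a b c d (fun z => ∑ i : Fin N, z i ^ 2) (fun i => (x i : ℂ))
          = ((MvPolynomial.eval x P : ℝ) : ℂ)) ∧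
      MvPolynomial.coeff 0 P
        = (q * t ^ ((N : ℤ) - 1) / (a * |b|) * (1 - q) * (1 - t ^ N) / (1 - t))
            * (1 + q) * (t ^ ((1 : ℤ) - N) * q⁻¹ - 1) ∧
      0 < MvPolynomial.coeff 0 P := by
  obtain ⟨m, rfl⟩ : ∃ m, N = m + 2 := ⟨N - 2, by omega⟩
  have hq0 : q ≠ 0 := hq.ne'
  have ht0 : t ≠ 0 := ht.ne'
  have ha0 : a ≠ 0 := ha.ne'
  have hb0 : b ≠ 0 := hb.ne
  have htne1 : t ≠ 1 := ht1.ne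
  have htine1 : t⁻¹ ≠ 1 := by rw [ne_eq, inv_eq_one]; exact htne1
  -- real constants
  set A1 : ℝ := t ^ (m+1) * (-(q / (a * b))) * (q ^ 2 - 1) * Complex.normSq d with hA1
  set B1 : ℝ := -(t ^ (m+1) * (-(q / (a * b))) * (q ^ 2 - 1) * (2 * d.re)) with hB1
  set G1 : ℝ := t ^ (m+1) * (-(q / (a * b))) * (q ^ 2 - 1) with hG1
  set A2 : ℝ := t ^ (m+1) * (-(q ^ 2 / (a * b))) * ((q⁻¹) ^ 2 - 1) * (a * b / q ^ 2) with hA2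
  set B2 : ℝ := -(t ^ (m+1) * (-(q ^ 2 / (a * b))) * ((q⁻¹) ^ 2 - 1) * ((a + b) / q)) with hB2
  set G2 : ℝ := t ^ (m+1) * (-(q ^ 2 / (a * b))) * ((q⁻¹) ^ 2 - 1) with hG2
  set cE1 : ℝ := A1 * t ^ (m+1) + A2 * (t⁻¹) ^ (m+1) with hcE1
  set cE2 : ℝ := -(A1 * t ^ m * (t + 1)) - A2 * (t⁻¹) ^ m * (t⁻¹ + 1) with hcE2
  set cB : ℝ := B1 * t ^ (m+1) + B2 * (t⁻¹) ^ (m+1) with hcB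
  set cK : ℝ := G1 * (∑ k ∈ Finset.range (m+2), t ^ k)
      + G2 * (∑ k ∈ Finset.range (m+2), (t⁻¹) ^ k) with hcK
  set Pp : MvPolynomial (Fin (m+2)) ℝ := MvPolynomial.C cE1
      * (∑ T ∈ Finset.powersetCard 1 Finset.univ, ∏ i ∈ T, MvPolynomial.X i) ^ 2
    + MvPolynomial.C cE2
      * (∑ T ∈ Finset.powersetCard 2 Finset.univ, ∏ i ∈ T, MvPolynomial.X i)
    + MvPolynomial.C cB
      * (∑ T ∈ Finset.powersetCard 1 Finset.univ, ∏ i ∈ T, MvPolynomial.X i)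
    + MvPolynomial.C cK with hPp
  -- constant coefficient of Pp
  have hco : MvPolynomial.coeff 0 Pp = cK := by
    rw [← MvPolynomial.constantCoeff_eq, hPp]
    simp only [map_add, map_mul, map_pow, map_sum, map_prod, MvPolynomial.constantCoeff_C,
      MvPolynomial.constantCoeff_X]
    have hz1 : ∀ n, 0 < n → ∀ T ∈ Finset.powersetCard n (Finset.univ : Finset (Fin (m+2))),
        (∏ _i ∈ T, (0:ℝ)) = 0 := by
      intro n hn T hT
      have hcard := (Finset.mem_powersetCard.mp hT).2
      obtain ⟨i, hi⟩ := Finset.card_pos.mp (hcard ▸ hn)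
      exact Finset.prod_eq_zero hi rfl
    rw [Finset.sum_congr rfl (hz1 1 one_pos), Finset.sum_congr rfl (hz1 2 two_pos)]
    simp
  -- value of cK
  have hzp1 : t ^ (((m + 2 : ℕ) : ℤ) - 1) = t ^ (m+1) := by
    rw [show ((m + 2 : ℕ) : ℤ) - 1 = ((m + 1 : ℕ) : ℤ) by push_cast; ring, zpow_natCast]
  have hzp2 : t ^ ((1 : ℤ) - ((m + 2 : ℕ) : ℤ)) = (t ^ (m+1))⁻¹ := by
    rw [show (1 : ℤ) - ((m + 2 : ℕ) : ℤ) = -((m + 1 : ℕ) : ℤ) by push_cast; ring, zpow_neg,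
      zpow_natCast]
  have hcKval : cK = (q * t ^ (((m + 2 : ℕ) : ℤ) - 1) / (a * |b|) * (1 - q)
      * (1 - t ^ (m + 2)) / (1 - t)) * (1 + q)
      * (t ^ ((1 : ℤ) - ((m + 2 : ℕ) : ℤ)) * q⁻¹ - 1) := by
    rw [hcK, hG1, hG2, geom_sum_eq htne1, geom_sum_eq htine1, hzp1, hzp2, abs_of_neg hb]
    have h1 : t - 1 ≠ 0 := sub_ne_zero.mpr htne1
    have h2 : t⁻¹ - 1 ≠ 0 := sub_ne_zero.mpr htine1
    have h3 : (1:ℝ) - t ≠ 0 := sub_ne_zero.mpr (Ne.symm htne1)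
    simp only [inv_pow]
    field_simp
    ring
  have htm1 : (0:ℝ) < t ^ (m+1) := pow_pos ht _
  have hpos : 0 < cK := by
    rw [hcKval, hzp1, hzp2]
    have hf1 : 0 < q * t ^ (m+1) / (a * |b|) * (1 - q) * (1 - t ^ (m + 2)) / (1 - t) := by
      apply div_pos
      apply mul_pos
      apply mul_pos
      · exact div_pos (mul_pos hq htm1) (mul_pos ha (abs_pos.mpr hb0))
      · linarith
      · have : t ^ (m+2) < 1 := pow_lt_one₀ ht.le ht1 (by omega)
        linarith
      · linarith
    have hf3 : 0 < (t ^ (m+1))⁻¹ * q⁻¹ - 1 := by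
      have h1 : 1 < (t ^ (m+1))⁻¹ := by
        rw [lt_inv_comm₀]
        · simpa using pow_lt_one₀ ht.le ht1 (Nat.succ_ne_zero m)
        · norm_num
        · exact htm1
      have h2 : 1 < q⁻¹ := by
        rw [lt_inv_comm₀] <;> simpa
      have h3 : (1:ℝ) * 1 < (t ^ (m+1))⁻¹ * q⁻¹ :=
        mul_lt_mul' h1.le h2 zero_le_one (lt_trans one_pos h1)
      linarith
    have := mul_pos (mul_pos hf1 (by linarith : (0:ℝ) < 1 + q)) hf3
    exact this
  refine ⟨Pp, ?_, hco.trans hcKval, by rw [hco]; exact hpos⟩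
  -- evaluation identity
  intro x hx0 hxd
  have hz0 : ∀ i : Fin (m+2), ((x i : ℝ) : ℂ) ≠ 0 := fun i => by
    simpa using hx0 i
  have hzinj : Function.Injective (fun i : Fin (m+2) => ((x i : ℝ) : ℂ)) := by
    intro i j hij
    by_contra hne
    simp only [Complex.ofReal_inj] at hij
    exact hxd i j hne hij
  set z : Fin (m+2) → ℂ := fun i => ((x i : ℝ) : ℂ) with hzdef
  have hzexp : (((m + 2 : ℕ) : ℤ) - 1) = ((m + 1 : ℕ) : ℤ) := by push_cast; ring
  have hqc0 : (q : ℂ) ≠ 0 := by exact_mod_cast hq0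
  have htc0 : (t : ℂ) ≠ 0 := by exact_mod_cast ht0
  have htc1 : (t : ℂ) ≠ 1 := by exact_mod_cast htne1
  have htci0 : ((t : ℂ))⁻¹ ≠ 0 := inv_ne_zero htc0
  have htci1 : ((t : ℂ))⁻¹ ≠ 1 := by
    rw [ne_eq, inv_eq_one]; exact htc1
  have hc1 : c * d = ((Complex.normSq d : ℝ) : ℂ) := by
    rw [hcd, mul_comm, Complex.mul_conj]
  have hc2 : c + d = 2 * ((d.re : ℝ) : ℂ) := by
    rw [hcd, add_comm, Complex.add_conj]; push_cast; ring
  have hsigp : ∀ zz : ℂ, zz ≠ 0 →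
      bqjSigmaPlusN (m+2) q t a b c d zz * (((q : ℂ) * zz) ^ 2 - zz ^ 2)
        = ((A1 : ℝ) : ℂ) * zz ^ 2 + ((B1 : ℝ) : ℂ) * zz + ((G1 : ℝ) : ℂ) := by
    intro zz hzz
    unfold bqjSigmaPlusN
    rw [hzexp, zpow_natCast, hA1, hB1, hG1]
    have hzz1 : zz⁻¹ * zz = 1 := inv_mul_cancel₀ hzz
    push_cast
    linear_combination ((t:ℂ) ^ (m+1) * (-((q:ℂ) / ((a:ℂ) * (b:ℂ)))) * ((q:ℂ) ^ 2 - 1)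
        * (-(c + d) * zz + zz⁻¹ * zz + 1)) * hzz1
      + ((t:ℂ) ^ (m+1) * (-((q:ℂ) / ((a:ℂ) * (b:ℂ)))) * ((q:ℂ) ^ 2 - 1) * zz ^ 2) * hc1
      - ((t:ℂ) ^ (m+1) * (-((q:ℂ) / ((a:ℂ) * (b:ℂ)))) * ((q:ℂ) ^ 2 - 1) * zz) * hc2
  have hsigm : ∀ zz : ℂ, zz ≠ 0 →
      bqjSigmaMinusN (m+2) q t a b zz * (((q : ℂ))⁻¹ * zz) ^ 2
          - bqjSigmaMinusN (m+2) q t a b zz * zz ^ 2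
        = ((A2 : ℝ) : ℂ) * zz ^ 2 + ((B2 : ℝ) : ℂ) * zz + ((G2 : ℝ) : ℂ) := by
    intro zz hzz
    unfold bqjSigmaMinusN
    rw [hzexp, zpow_natCast, hA2, hB2, hG2]
    have hzz1 : zz⁻¹ * zz = 1 := inv_mul_cancel₀ hzz
    push_cast
    linear_combination ((t:ℂ) ^ (m+1) * (-((q:ℂ) ^ 2 / ((a:ℂ) * (b:ℂ)))) * (((q:ℂ)⁻¹) ^ 2 - 1)
        * (-(((a:ℂ) + (b:ℂ)) / (q:ℂ)) * zz + zz⁻¹ * zz + 1)) * hzz1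
  have hterm : ∀ i ∈ (Finset.univ : Finset (Fin (m+2))),
      (bqjVandermonde (m+2) (Function.update z i ((t : ℂ) * z i)) / bqjVandermonde (m+2) z
          * bqjSigmaPlusN (m+2) q t a b c d (z i)
          * ((∑ j, (Function.update z i ((q : ℂ) * z i) j) ^ 2) - ∑ j, z j ^ 2)
        + bqjVandermonde (m+2) (Function.update z i (((t : ℂ))⁻¹ * z i)) / bqjVandermonde (m+2) z
          * bqjSigmaMinusN (m+2) q t a b (z i)
          * ((∑ j, (Function.update z i (((q : ℂ))⁻¹ * z i) j) ^ 2) - ∑ j, z j ^ 2))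
      = (∏ j ∈ Finset.univ.erase i, ((t : ℂ) * z i - z j))
          * (∏ j ∈ Finset.univ.erase i, (z i - z j))⁻¹
          * (((A1 : ℝ) : ℂ) * z i ^ 2 + ((B1 : ℝ) : ℂ) * z i + ((G1 : ℝ) : ℂ))
        + (∏ j ∈ Finset.univ.erase i, (((t : ℂ))⁻¹ * z i - z j))
          * (∏ j ∈ Finset.univ.erase i, (z i - z j))⁻¹
          * (((A2 : ℝ) : ℂ) * z i ^ 2 + ((B2 : ℝ) : ℂ) * z i + ((G2 : ℝ) : ℂ)) := by
    intro i _
    rw [vandermonde_ratio z hzinj i ((t : ℂ) * z i),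
      vandermonde_ratio z hzinj i (((t : ℂ))⁻¹ * z i), sum_update_sq, sum_update_sq]
    linear_combination ((∏ j ∈ Finset.univ.erase i, ((t : ℂ) * z i - z j))
        * (∏ j ∈ Finset.univ.erase i, (z i - z j))⁻¹) * hsigp (z i) (hz0 i)
      + ((∏ j ∈ Finset.univ.erase i, (((t : ℂ))⁻¹ * z i - z j))
        * (∏ j ∈ Finset.univ.erase i, (z i - z j))⁻¹) * hsigm (z i) (hz0 i)
  have hev : MvPolynomial.eval x Pp
      = cE1 * (∑ T ∈ Finset.powersetCard 1 Finset.univ, ∏ i ∈ T, x i) ^ 2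
        + cE2 * (∑ T ∈ Finset.powersetCard 2 Finset.univ, ∏ i ∈ T, x i)
        + cB * (∑ T ∈ Finset.powersetCard 1 Finset.univ, ∏ i ∈ T, x i) + cK := by
    rw [hPp]
    simp only [map_add, map_mul, map_pow, map_sum, map_prod, MvPolynomial.eval_C,
      MvPolynomial.eval_X]
  show bqjDN (m+2) q t a b c d (fun w => ∑ i, w i ^ 2) z = _
  unfold bqjDN
  simp only []
  rw [Finset.sum_congr rfl hterm, Finset.sum_add_distrib,
    key_sum z hz0 hzinj htc0 htc1 ((A1 : ℝ) : ℂ) ((B1 : ℝ) : ℂ) ((G1 : ℝ) : ℂ),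
    key_sum z hz0 hzinj htci0 htci1 ((A2 : ℝ) : ℂ) ((B2 : ℝ) : ℂ) ((G2 : ℝ) : ℂ), hev]
  rw [hcE1, hcE2, hcB, hcK, hA1, hB1, hG1, hA2, hB2, hG2]
  simp only [hzdef]
  push_cast
  ring
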